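/- Let Δ : [0,1] → ℝ be measurable with Δ ≥ Δ* > 0 satisfying the measure condition with constant C, p ∈ (1,2), and u : [0,1] → [0,1] the power-law schedule with u'(s) = c_p Δ(u(s))^p, c_p = ∫₀¹ Δ^{−p}. Then ∫₀¹ u'(s)² / Δ(u(s))³ ds = c_p ∫₀¹ Δ(v)^{p−3} dv ≤ (Cp/(p−1))·(C(3−p)/(2−p))·Δ*^{−1}. -/

import Mathlib

open MeasureTheory Set

lemma gap_rpow_integral_bound (Δ : ℝ → ℝ) (Δstar C α : ℝ)
    (hmeas : Measurable Δ)
    (hlow : ∀ v ∈ Icc (0:ℝ) 1, Δstar ≤ Δ v)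
    (hΔstar : 0 < Δstar) (hC : 0 < C)
    (hmc : ∀ x > (0:ℝ), (volume {v ∈ Icc (0:ℝ) 1 | Δ v ≤ x}).toReal ≤ C * x)
    (hα : 1 < α) :
    ∫ v in Icc (0:ℝ) 1, Δ v ^ (-α) ≤ C * α / (α - 1) * Δstar ^ (1 - α) := by
  have hα0 : (0:ℝ) < α := by linarith
  have hαne : α ≠ 0 := ne_of_gt hα0
  set μ := volume.restrict (Icc (0:ℝ) 1) with hμ
  set f : ℝ → ℝ := fun v => Δ v ^ (-α) with hf
  have hfm : Measurable f := by fun_prop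
  have hfnn : 0 ≤ᵐ[μ] f := by
    refine (ae_restrict_iff' measurableSet_Icc).mpr (ae_of_all _ fun v hv => ?_)
    exact
      (Real.rpow_pos_of_pos (lt_of_lt_of_le hΔstar (hlow v hv)) _).le
  set T : ℝ := Δstar ^ (-α) with hT
  have hTpos : 0 < T := Real.rpow_pos_of_pos hΔstar _
  have hexp : -1 < -α⁻¹ := by
    have : α⁻¹ < 1 := by rw [inv_lt_one_iff₀]; right; exact hα
    linarith
  have hexp0 : 0 < 1 - α⁻¹ := by
    have : α⁻¹ < 1 := by rw [inv_lt_one_iff₀]; right; exact hα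
    linarith
  -- layer cake
  have key : ∫⁻ v, ENNReal.ofReal (f v) ∂μ = ∫⁻ t in Ioi (0:ℝ), μ {a | t ≤ f a} :=
    lintegral_eq_lintegral_meas_le μ hfnn hfm.aemeasurable
  -- split the t-integral
  have hsplit : Ioi (0:ℝ) = Ioc 0 T ∪ Ioi T := (Ioc_union_Ioi_eq_Ioi hTpos.le).symm
  have htail : ∫⁻ t in Ioi T, μ {a | t ≤ f a} = 0 := by
    rw [← lintegral_zero (μ := volume.restrict (Ioi T))]
    refine setLIntegral_congr_fun measurableSet_Ioi (fun t ht => ?_)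
    have : {a | t ≤ f a} ∩ Icc (0:ℝ) 1 = ∅ := by
      ext v
      simp only [mem_inter_iff, mem_setOf_eq, mem_empty_iff_false, iff_false, not_and]
      intro htv hv
      have hdv : Δstar ≤ Δ v := hlow v hv
      have : f v ≤ T := Real.rpow_le_rpow_of_nonpos hΔstar hdv (neg_nonpos.mpr hα0.le)
      exact absurd (le_trans htv this) (not_le.mpr ht)
    rw [hμ, Measure.restrict_apply' measurableSet_Icc, this, measure_empty]
  have hbound : ∀ t ∈ Ioc (0:ℝ) T,
      μ {a | t ≤ f a} ≤ ENNReal.ofReal (C * t ^ (-α⁻¹)) := by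
    intro t ht
    have ht0 : 0 < t := ht.1
    have hx : (0:ℝ) < t ^ (-α⁻¹) := Real.rpow_pos_of_pos ht0 _
    have hsub : {a | t ≤ f a} ∩ Icc (0:ℝ) 1 ⊆ {v ∈ Icc (0:ℝ) 1 | Δ v ≤ t ^ (-α⁻¹)} := by
      rintro v ⟨htv, hv⟩
      refine ⟨hv, ?_⟩
      have hdv : 0 < Δ v := lt_of_lt_of_le hΔstar (hlow v hv)
      have h1 : f v ^ (-α⁻¹) ≤ t ^ (-α⁻¹) :=
        Real.rpow_le_rpow_of_nonpos ht0 htv (neg_nonpos.mpr (inv_nonneg.mpr hα0.le))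
      have h2 : f v ^ (-α⁻¹) = Δ v := by
        rw [hf]
        rw [← Real.rpow_mul hdv.le]
        rw [show (-α) * (-α⁻¹) = α * α⁻¹ by ring, mul_inv_cancel₀ hαne, Real.rpow_one]
      rwa [h2] at h1
    have hfin : volume ({v ∈ Icc (0:ℝ) 1 | Δ v ≤ t ^ (-α⁻¹)}) ≠ ⊤ := by
      refine ne_top_of_le_ne_top ?_ (measure_mono (fun v hv => hv.1))
      simp [Real.volume_Icc]
    calc μ {a | t ≤ f a} = volume ({a | t ≤ f a} ∩ Icc (0:ℝ) 1) := by
          rw [hμ, Measure.restrict_apply' measurableSet_Icc]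
      _ ≤ volume ({v ∈ Icc (0:ℝ) 1 | Δ v ≤ t ^ (-α⁻¹)}) := measure_mono hsub
      _ ≤ ENNReal.ofReal (C * t ^ (-α⁻¹)) := by
          rw [ENNReal.le_ofReal_iff_toReal_le hfin (by positivity)]
          exact hmc _ hx
  -- integrability of the comparison function
  have hii : IntervalIntegrable (fun t : ℝ => t ^ (-α⁻¹)) volume 0 T :=
    intervalIntegral.intervalIntegrable_rpow' hexp
  have hio : IntegrableOn (fun t : ℝ => C * t ^ (-α⁻¹)) (Ioc 0 T) volume := by
    have := (intervalIntegrable_iff_integrableOn_Ioc_of_le hTpos.le).mp hii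
    exact this.const_mul C
  have hcomp : ∫⁻ t in Ioc (0:ℝ) T, ENNReal.ofReal (C * t ^ (-α⁻¹))
      = ENNReal.ofReal (∫ t in Ioc (0:ℝ) T, C * t ^ (-α⁻¹)) := by
    rw [← ofReal_integral_eq_lintegral_ofReal hio]
    exact (ae_restrict_iff' measurableSet_Ioc).mpr (ae_of_all _ fun t ht =>
      mul_nonneg hC.le (Real.rpow_nonneg ht.1.le _))
  have hval : ∫ t in Ioc (0:ℝ) T, C * t ^ (-α⁻¹) = C * T ^ (1 - α⁻¹) / (1 - α⁻¹) := by
    rw [← intervalIntegral.integral_of_le hTpos.le, intervalIntegral.integral_const_mul,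
      integral_rpow (Or.inl hexp)]
    rw [Real.zero_rpow (by linarith : -α⁻¹ + 1 ≠ 0)]
    rw [show -α⁻¹ + 1 = 1 - α⁻¹ by ring]
    ring
  -- combine
  have hlin : ∫⁻ v, ENNReal.ofReal (f v) ∂μ
      ≤ ENNReal.ofReal (C * T ^ (1 - α⁻¹) / (1 - α⁻¹)) := by
    rw [key, hsplit, lintegral_union measurableSet_Ioi Ioc_disjoint_Ioi_same, htail, add_zero]
    calc ∫⁻ t in Ioc (0:ℝ) T, μ {a | t ≤ f a}
        ≤ ∫⁻ t in Ioc (0:ℝ) T, ENNReal.ofReal (C * t ^ (-α⁻¹)) := by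
          refine setLIntegral_mono' measurableSet_Ioc hbound
      _ = ENNReal.ofReal (C * T ^ (1 - α⁻¹) / (1 - α⁻¹)) := by rw [hcomp, hval]
  have hreal : ∫ v in Icc (0:ℝ) 1, Δ v ^ (-α)
      = (∫⁻ v, ENNReal.ofReal (f v) ∂μ).toReal := by
    rw [integral_eq_lintegral_of_nonneg_ae hfnn hfm.aestronglyMeasurable.restrict]
  rw [hreal]
  have hfin2 : ENNReal.ofReal (C * T ^ (1 - α⁻¹) / (1 - α⁻¹)) ≠ ⊤ := ENNReal.ofReal_ne_top
  calc (∫⁻ v, ENNReal.ofReal (f v) ∂μ).toReal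
      ≤ (ENNReal.ofReal (C * T ^ (1 - α⁻¹) / (1 - α⁻¹))).toReal :=
        ENNReal.toReal_mono hfin2 hlin
    _ = C * T ^ (1 - α⁻¹) / (1 - α⁻¹) := ENNReal.toReal_ofReal (by positivity)
    _ = C * α / (α - 1) * Δstar ^ (1 - α) := by
        have hinv : α * α⁻¹ = 1 := mul_inv_cancel₀ hαne
        have hexpeq : (-α) * (1 - α⁻¹) = 1 - α := by linear_combination hinv
        rw [hT, ← Real.rpow_mul hΔstar.le, hexpeq]
        have h1 : (1:ℝ) - α⁻¹ = (α - 1) / α := by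
          field_simp
        rw [h1, div_div_eq_mul_div]
        ring

/-- The first-order-derivative term of the adiabatic error under power-law scheduling:
`∫₀¹ u'(s)²/Δ(u(s))³ ds = c_p ∫₀¹ Δ(v)^{p−3} dv ≤ (Cp/(p−1))·(C(3−p)/(2−p))·Δ*⁻¹`. -/
theorem first_derivative_term_bound (Δ : ℝ → ℝ) (Δstar C p : ℝ)
    (hmeas : Measurable Δ)
    (hlow : ∀ v ∈ Icc (0:ℝ) 1, Δstar ≤ Δ v)
    (hΔstar : 0 < Δstar) (hC : 0 < C)
    (hmc : ∀ x > (0:ℝ), (volume {v ∈ Icc (0:ℝ) 1 | Δ v ≤ x}).toReal ≤ C * x)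
    (hp : p ∈ Ioo (1:ℝ) 2)
    (u u' : ℝ → ℝ)
    (hbij : BijOn u (Icc 0 1) (Icc 0 1))
    (hderiv : ∀ s ∈ Icc (0:ℝ) 1, HasDerivAt u (u' s) s)
    (hu'cont : ContinuousOn u' (Icc 0 1))
    (hode : ∀ s ∈ Icc (0:ℝ) 1, u' s = (∫ v in (0:ℝ)..1, Δ v ^ (-p)) * Δ (u s) ^ p) :
    (∫ s in (0:ℝ)..1, (u' s) ^ 2 / Δ (u s) ^ 3
        = (∫ v in (0:ℝ)..1, Δ v ^ (-p)) * ∫ v in (0:ℝ)..1, Δ v ^ (p - 3))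
    ∧ ∫ s in (0:ℝ)..1, (u' s) ^ 2 / Δ (u s) ^ 3
        ≤ (C * p / (p - 1)) * (C * (3 - p) / (2 - p)) * Δstar⁻¹ := by
  obtain ⟨hp1, hp2⟩ := hp
  set c : ℝ := ∫ v in (0:ℝ)..1, Δ v ^ (-p) with hc
  -- interval integrals as Icc set integrals
  have hIcc : ∀ g : ℝ → ℝ, (∫ v in (0:ℝ)..1, g v) = ∫ v in Icc (0:ℝ) 1, g v := by
    intro g
    rw [intervalIntegral.integral_of_le zero_le_one, integral_Icc_eq_integral_Ioc]
  have hc0 : 0 ≤ c := by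
    rw [hc, hIcc]
    exact setIntegral_nonneg measurableSet_Icc fun v hv =>
      (Real.rpow_pos_of_pos (lt_of_lt_of_le hΔstar (hlow v hv)) _).le
  -- change of variables
  have hcov : ∫ v in Icc (0:ℝ) 1, Δ v ^ (p - 3)
      = ∫ s in Icc (0:ℝ) 1, |u' s| • Δ (u s) ^ (p - 3) := by
    have h := integral_image_eq_integral_abs_deriv_smul measurableSet_Icc
      (fun x hx => (hderiv x hx).hasDerivWithinAt) hbij.injOn (fun v => Δ v ^ (p - 3))
    rwa [hbij.image_eq] at h
  -- pointwise identity on Icc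
  have hpt : EqOn (fun s => (u' s) ^ 2 / Δ (u s) ^ 3)
      (fun s => c * (|u' s| • Δ (u s) ^ (p - 3))) (Icc (0:ℝ) 1) := by
    intro s hs
    have hus : u s ∈ Icc (0:ℝ) 1 := hbij.mapsTo hs
    set d : ℝ := Δ (u s) with hdd
    have hd : 0 < d := lt_of_lt_of_le hΔstar (hlow _ hus)
    have hode' : u' s = c * d ^ p := hode s hs
    have habs : |u' s| = c * d ^ p := by
      rw [hode', abs_of_nonneg (mul_nonneg hc0 (Real.rpow_pos_of_pos hd _).le)]
    have h3 : (d:ℝ) ^ (3:ℕ) = d ^ ((3:ℝ)) := by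
      rw [← Real.rpow_natCast d 3]; norm_num
    have hsub : d ^ (p - 3) = d ^ p / d ^ (3:ℕ) := by
      rw [Real.rpow_sub hd, h3]
    simp only [smul_eq_mul]
    rw [habs, hode', hsub]
    have hd3 : (d:ℝ) ^ (3:ℕ) ≠ 0 := ne_of_gt (pow_pos hd 3)
    field_simp
    rw [← hdd]; field_simp
  have heq : ∫ s in (0:ℝ)..1, (u' s) ^ 2 / Δ (u s) ^ 3
      = c * ∫ v in (0:ℝ)..1, Δ v ^ (p - 3) := by
    rw [hIcc, hIcc, setIntegral_congr_fun measurableSet_Icc hpt, hcov]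
    simp only [smul_eq_mul]
    rw [MeasureTheory.integral_const_mul]
  refine ⟨heq, ?_⟩
  rw [heq]
  -- bounds
  have hb1 : c ≤ C * p / (p - 1) * Δstar ^ (1 - p) := by
    rw [hc, hIcc]
    exact gap_rpow_integral_bound Δ Δstar C p hmeas hlow hΔstar hC hmc hp1
  have hb2 : (∫ v in (0:ℝ)..1, Δ v ^ (p - 3))
      ≤ C * (3 - p) / (3 - p - 1) * Δstar ^ (1 - (3 - p)) := by
    rw [hIcc]
    have := gap_rpow_integral_bound Δ Δstar C (3 - p) hmeas hlow hΔstar hC hmc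
      (by linarith)
    simp only [show -(3 - p) = p - 3 by ring] at this
    exact this
  have hI0 : 0 ≤ ∫ v in (0:ℝ)..1, Δ v ^ (p - 3) := by
    rw [hIcc]
    exact setIntegral_nonneg measurableSet_Icc fun v hv =>
      (Real.rpow_pos_of_pos (lt_of_lt_of_le hΔstar (hlow v hv)) _).le
  have hB1pos : 0 ≤ C * p / (p - 1) * Δstar ^ (1 - p) :=
    mul_nonneg (div_nonneg (mul_nonneg hC.le (by linarith)) (by linarith))
      (Real.rpow_nonneg hΔstar.le _)
  calc c * ∫ v in (0:ℝ)..1, Δ v ^ (p - 3)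
      ≤ (C * p / (p - 1) * Δstar ^ (1 - p)) *
        (C * (3 - p) / (3 - p - 1) * Δstar ^ (1 - (3 - p))) :=
        mul_le_mul hb1 hb2 hI0 hB1pos
    _ = (C * p / (p - 1)) * (C * (3 - p) / (2 - p)) *
        (Δstar ^ (1 - p) * Δstar ^ (1 - (3 - p))) := by ring_nf
    _ = (C * p / (p - 1)) * (C * (3 - p) / (2 - p)) * Δstar⁻¹ := by
        rw [← Real.rpow_add hΔstar, show (1 - p) + (1 - (3 - p)) = -1 by ring,
          Real.rpow_neg_one]
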